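/- arXiv:2111.06354 — 4 statements merged into one kernel-verified Lean document; each statement's English description precedes it below -/
import Mathlib

section
/- Let h = x − δ with δ in the algebraic closure of ℚ_p, m ∈ ℤ_p, t > 0, T = ⌈t⌉. Then at most one i ∈ {0, 1, …, p−1} satisfies v_p(m + i·p^{T−1} − δ) ≥ t. Consequently, defining χ̂_t(m) = ∫_{⌈t⌉−1}^{⌈t⌉} χ_u(m) du where χ_u(m) = 1 if v_p(m − δ) ≥ u and 0 otherwise, one has χ̂_{t−1}(m) ≥ Σ_{i=0}^{p−1} χ̂_t(m + i·p^{t−1}) for integer t ≥ 1. -/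
open Polynomial

open Module

set_option synthInstance.maxHeartbeats 1000000
set_option maxHeartbeats 1600000

variable {p : ℕ} [Fact p.Prime]

section Core

variable (p) (L : Type*) [Field L] [Algebra ℚ_[p] L] [FiniteDimensional ℚ_[p] L]

/-- Sup-norm of the coordinates w.r.t. a fixed basis. -/
noncomputable def rr (u : L) : ℝ := ‖(Module.finBasis ℚ_[p] L).equivFun u‖

variable {L}

lemma rr_nonneg (u : L) : 0 ≤ rr p L u := norm_nonneg _

lemma rr_eq_zero_iff {u : L} : rr p L u = 0 ↔ u = 0 := by
  rw [rr, norm_eq_zero, LinearEquiv.map_eq_zero_iff]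

lemma rr_smul (c : ℚ_[p]) (u : L) : rr p L (c • u) = ‖c‖ * rr p L u := by
  rw [rr, rr, map_smul, norm_smul]

lemma rr_sum_le {ι : Type*} (s : Finset ι) (f : ι → L) {C : ℝ} (hC : 0 ≤ C)
    (h : ∀ i ∈ s, rr p L (f i) ≤ C) : rr p L (∑ i ∈ s, f i) ≤ C := by
  rw [rr, map_sum]
  rw [pi_norm_le_iff_of_nonneg hC]
  intro j
  rw [Finset.sum_apply]
  refine IsUltrametricDist.norm_sum_le_of_forall_le_of_nonneg hC (fun i hi => ?_)
  exact le_trans (norm_le_pi_norm _ j) (h i hi)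

lemma lin_bound (f : L →ₗ[ℚ_[p]] (Fin (finrank ℚ_[p] L) → ℚ_[p])) :
    ∃ C : ℝ, 0 ≤ C ∧ ∀ u, ‖f u‖ ≤ C * rr p L u := by
  set b := Module.finBasis ℚ_[p] L
  refine ⟨∑ j, ‖f (b j)‖, Finset.sum_nonneg fun j _ => norm_nonneg _, fun u => ?_⟩
  conv_lhs => rw [← b.sum_equivFun u]
  rw [map_sum]
  refine le_trans (norm_sum_le _ _) ?_
  rw [Finset.sum_mul]
  refine Finset.sum_le_sum fun j _ => ?_
  rw [map_smul, norm_smul, mul_comm]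
  exact mul_le_mul_of_nonneg_left (norm_le_pi_norm _ j) (norm_nonneg _)

lemma mul_bound : ∃ C : ℝ, 0 < C ∧ ∀ u w : L, rr p L (u * w) ≤ C * (rr p L u * rr p L w) := by
  set b := Module.finBasis ℚ_[p] L
  have key : ∀ i : Fin (finrank ℚ_[p] L), ∃ C : ℝ, 0 ≤ C ∧
      ∀ w, rr p L (b i * w) ≤ C * rr p L w := by
    intro i
    obtain ⟨C, hC0, hC⟩ := lin_bound p
      (b.equivFun.toLinearMap ∘ₗ LinearMap.mulLeft ℚ_[p] (b i))
    exact ⟨C, hC0, fun w => hC w⟩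
  choose C hC0 hC using key
  have hs : (0:ℝ) ≤ ∑ i, C i := Finset.sum_nonneg fun i _ => hC0 i
  refine ⟨1 + ∑ i, C i, by linarith, fun u w => ?_⟩
  have hu : u * w = ∑ i, b.equivFun u i • (b i * w) := by
    conv_lhs => rw [← b.sum_equivFun u, Finset.sum_mul]
    exact Finset.sum_congr rfl fun i _ => smul_mul_assoc _ _ _
  rw [hu, rr, map_sum]
  simp only [map_smul]
  refine le_trans (norm_sum_le _ _) ?_
  have step : ∀ i : Fin (finrank ℚ_[p] L),
      ‖b.equivFun u i • b.equivFun (b i * w)‖ ≤ C i * (rr p L u * rr p L w) := by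
    intro i
    rw [norm_smul]
    calc ‖b.equivFun u i‖ * ‖b.equivFun (b i * w)‖
        ≤ rr p L u * (C i * rr p L w) := by
          refine mul_le_mul (norm_le_pi_norm _ i) (hC i w) (norm_nonneg _) (rr_nonneg p u)
      _ = C i * (rr p L u * rr p L w) := by ring
  calc ∑ i, ‖b.equivFun u i • b.equivFun (b i * w)‖
      ≤ ∑ i, C i * (rr p L u * rr p L w) := Finset.sum_le_sum fun i _ => step i
    _ = (∑ i, C i) * (rr p L u * rr p L w) := by rw [Finset.sum_mul]
    _ ≤ (1 + ∑ i, C i) * (rr p L u * rr p L w) := by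
        have : (0:ℝ) ≤ rr p L u * rr p L w :=
          mul_nonneg (rr_nonneg p u) (rr_nonneg p w)
        nlinarith

end Core

section Core2

variable (p) {L : Type*} [Field L] [Algebra ℚ_[p] L] [FiniteDimensional ℚ_[p] L]

lemma one_lt_p_real : (1:ℝ) < p := by exact_mod_cast (Fact.out : p.Prime).one_lt

lemma p_real_pos : (0:ℝ) < p := lt_trans one_pos (one_lt_p_real p)

/-- For nonzero `u`, the coordinate sup-norm is an integer power of `p`. -/
lemma rr_eq_zpow {u : L} (hu : u ≠ 0) : ∃ m : ℤ, rr p L u = (p:ℝ) ^ (-m) := by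
  set b := Module.finBasis ℚ_[p] L
  set v := b.equivFun u with hv
  have hvne : v ≠ 0 := fun h => hu ((LinearEquiv.map_eq_zero_iff b.equivFun).mp h)
  have : Nonempty (Fin (finrank ℚ_[p] L)) := ⟨⟨0, finrank_pos⟩⟩
  have hne : (Finset.univ : Finset (Fin (finrank ℚ_[p] L))).Nonempty := Finset.univ_nonempty
  obtain ⟨j, _, hj⟩ := Finset.exists_mem_eq_sup Finset.univ hne fun i => ‖v i‖₊
  have hnorm : ‖v‖ = ‖v j‖ := by rw [Pi.norm_def, hj]; rfl
  have hvj : v j ≠ 0 := by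
    intro h
    apply hvne
    have : ‖v‖ = 0 := by rw [hnorm, h, norm_zero]
    exact norm_eq_zero.mp this
  exact ⟨(v j).valuation, by rw [rr, hnorm, Padic.norm_eq_zpow_neg_valuation hvj]⟩

lemma eps_M_bounds : ∃ ε M : ℝ, 0 < ε ∧ 0 ≤ M ∧ ∀ u : L, u ≠ 0 →
    ε * rr p L u ^ (finrank ℚ_[p] L) ≤ ‖Algebra.norm ℚ_[p] u‖ ∧
    ‖Algebra.norm ℚ_[p] u‖ ≤ M * rr p L u ^ (finrank ℚ_[p] L) := by
  classical
  set n := finrank ℚ_[p] L with hn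
  have hnpos : 0 < n := finrank_pos
  set b := Module.finBasis ℚ_[p] L
  set F : (Fin n → ℚ_[p]) → ℚ_[p] := fun v => Algebra.norm ℚ_[p] (b.equivFun.symm v) with hF
  have Fcont : Continuous F := by
    have : F = fun v => (((Algebra.leftMulMatrix b).toLinearMap ∘ₗ
        b.equivFun.symm.toLinearMap) v).det := by
      funext v
      simp [hF, Algebra.norm_eq_matrix_det b]
    rw [this]
    exact Continuous.matrix_det (LinearMap.continuous_of_finiteDimensional _)
  set S : Set (Fin n → ℚ_[p]) := Metric.sphere 0 1 with hS
  have hScpt : IsCompact S := isCompact_sphere 0 1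
  have hSne : S.Nonempty := by
    refine ⟨(Pi.single ⟨0, hnpos⟩ (1:ℚ_[p]) : Fin n → ℚ_[p]), ?_⟩
    rw [hS, mem_sphere_zero_iff_norm, Pi.norm_single, norm_one]
  have hcont : ContinuousOn (fun v => ‖F v‖) S := (continuous_norm.comp Fcont).continuousOn
  obtain ⟨vmin, hvminS, hmin⟩ := hScpt.exists_isMinOn hSne hcont
  obtain ⟨vmax, hvmaxS, hmax⟩ := hScpt.exists_isMaxOn hSne hcont
  have hmin' := isMinOn_iff.mp hmin
  have hmax' := isMaxOn_iff.mp hmax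
  have hFne : ∀ v ∈ S, F v ≠ 0 := by
    intro v hv
    rw [hF]
    rw [Algebra.norm_ne_zero_iff]
    intro h
    have : v = 0 := (LinearEquiv.map_eq_zero_iff b.equivFun.symm).mp h
    rw [hS, mem_sphere_zero_iff_norm, this, norm_zero] at hv
    norm_num at hv
  refine ⟨‖F vmin‖, ‖F vmax‖, norm_pos_iff.mpr (hFne vmin hvminS), norm_nonneg _, ?_⟩
  intro u hu
  obtain ⟨m, hm⟩ := rr_eq_zpow p hu
  set c : ℚ_[p] := (p:ℚ_[p]) ^ (-m) with hc
  have hcnorm : ‖c‖ = (p:ℝ) ^ m := by rw [hc, Padic.norm_p_zpow, neg_neg]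
  set u' := c • u with hu'
  have hrru' : rr p L u' = 1 := by
    rw [hu', rr_smul, hcnorm, hm, ← zpow_add₀ (ne_of_gt (p_real_pos p))]
    simp
  have hmem : b.equivFun u' ∈ S := by
    rw [hS, mem_sphere_zero_iff_norm]
    exact hrru'
  have hFu' : F (b.equivFun u') = Algebra.norm ℚ_[p] u' := by
    show Algebra.norm ℚ_[p] (b.equivFun.symm (b.equivFun u')) = _
    rw [b.equivFun.symm_apply_apply]
  have hNu' : Algebra.norm ℚ_[p] u' = c ^ n * Algebra.norm ℚ_[p] u := by
    rw [hu', Algebra.smul_def, map_mul, Algebra.norm_algebraMap, hn]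
  have hnormNu' : ‖Algebra.norm ℚ_[p] u'‖ = (p:ℝ) ^ (m * (n:ℤ)) * ‖Algebra.norm ℚ_[p] u‖ := by
    rw [hNu', norm_mul, norm_pow, hcnorm, ← zpow_natCast ((p:ℝ) ^ m), ← zpow_mul]
  have hrun : rr p L u ^ n = (p:ℝ) ^ (-(m * (n:ℤ))) := by
    rw [hm, ← zpow_natCast ((p:ℝ) ^ (-m)), ← zpow_mul, neg_mul]
  have hple : (0:ℝ) < (p:ℝ) ^ (m * (n:ℤ)) := zpow_pos (p_real_pos p) _
  have h1 : ‖F vmin‖ ≤ (p:ℝ) ^ (m * (n:ℤ)) * ‖Algebra.norm ℚ_[p] u‖ := by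
    rw [← hnormNu', ← hFu']; exact hmin' _ hmem
  have h2 : (p:ℝ) ^ (m * (n:ℤ)) * ‖Algebra.norm ℚ_[p] u‖ ≤ ‖F vmax‖ := by
    rw [← hnormNu', ← hFu']; exact hmax' _ hmem
  constructor
  · rw [hrun]
    rw [zpow_neg]
    rw [mul_inv_le_iff₀ hple, mul_comm]
    exact h1
  · rw [hrun, zpow_neg]
    rw [le_mul_inv_iff₀ hple, mul_comm ‖Algebra.norm ℚ_[p] u‖ _]
    exact h2

end Core2

section Core3

variable (p) {L : Type*} [Field L] [Algebra ℚ_[p] L] [FiniteDimensional ℚ_[p] L]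

/-- The key nonarchimedean property of the field norm map on a finite extension of `ℚ_p`. -/
theorem normmap_add_le_max (z w : L) (hz : z ≠ 0) (hw : w ≠ 0) (hzw : z + w ≠ 0) :
    ‖Algebra.norm ℚ_[p] (z + w)‖ ≤ max ‖Algebra.norm ℚ_[p] z‖ ‖Algebra.norm ℚ_[p] w‖ := by
  classical
  -- it suffices to prove it assuming ‖N w‖ ≤ ‖N z‖
  suffices H : ∀ z w : L, z ≠ 0 → w ≠ 0 → z + w ≠ 0 →
      ‖Algebra.norm ℚ_[p] w‖ ≤ ‖Algebra.norm ℚ_[p] z‖ →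
      ‖Algebra.norm ℚ_[p] (z + w)‖ ≤ ‖Algebra.norm ℚ_[p] z‖ by
    rcases le_total ‖Algebra.norm ℚ_[p] w‖ ‖Algebra.norm ℚ_[p] z‖ with h | h
    · exact le_max_of_le_left (H z w hz hw hzw h)
    · rw [add_comm] at hzw ⊢
      exact le_max_of_le_right (H w z hw hz hzw h)
  intro z w hz hw hzw hle
  set n := finrank ℚ_[p] L with hn
  have hnpos : 0 < n := finrank_pos
  obtain ⟨ε, M, hε, hM, hbounds⟩ := eps_M_bounds p (L := L)
  have hNz : Algebra.norm ℚ_[p] z ≠ 0 := Algebra.norm_ne_zero_iff.mpr hz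
  set q : L := w * z⁻¹ with hq
  have hqne : q ≠ 0 := mul_ne_zero hw (inv_ne_zero hz)
  have hNq : ‖Algebra.norm ℚ_[p] q‖ ≤ 1 := by
    have hmul : Algebra.norm ℚ_[p] q * Algebra.norm ℚ_[p] z = Algebra.norm ℚ_[p] w := by
      rw [← map_mul]
      congr 1
      rw [hq, mul_assoc, inv_mul_cancel₀ hz, mul_one]
    have := congrArg norm hmul
    rw [norm_mul] at this
    rw [← mul_le_mul_iff_left₀ (norm_pos_iff.mpr hNz), one_mul, this]
    exact hle
  -- powers of q are bounded
  set B : ℝ := max 1 (ε⁻¹ * 1) with hB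
  have hB1 : (1:ℝ) ≤ B := le_max_left _ _
  have hB0 : (0:ℝ) ≤ B := le_trans zero_le_one hB1
  have hpow : ∀ u : L, u ≠ 0 → ‖Algebra.norm ℚ_[p] u‖ ≤ 1 → ∀ k : ℕ, rr p L (u ^ k) ≤ B := by
    intro u hu hNu k
    have huk : u ^ k ≠ 0 := pow_ne_zero _ hu
    have h1 := (hbounds (u ^ k) huk).1
    have hNuk : ‖Algebra.norm ℚ_[p] (u ^ k)‖ ≤ 1 := by
      rw [map_pow, norm_pow]
      exact pow_le_one₀ (norm_nonneg _) hNu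
    have hrn : rr p L (u ^ k) ^ n ≤ ε⁻¹ * 1 := by
      rw [le_inv_mul_iff₀ hε]
      exact le_trans h1 hNuk
    rcases le_total (rr p L (u ^ k)) 1 with h | h
    · exact le_trans h hB1
    · refine le_trans ?_ (le_max_right 1 (ε⁻¹ * 1))
      exact le_trans (le_self_pow₀ h hnpos.ne') hrn
  have hq_pow := hpow q hqne hNq
  -- powers of 1 + q are bounded
  set s : L := 1 + q with hsdef
  have hsne : s ≠ 0 := by
    intro h
    apply hzw
    have : z + w = z * s := by
      rw [hsdef, hq, mul_add, mul_one, mul_comm w, ← mul_assoc, mul_inv_cancel₀ hz, one_mul]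
    rw [this, h, mul_zero]
  have hs_pow : ∀ k : ℕ, rr p L (s ^ k) ≤ B := by
    intro k
    rw [hsdef, add_pow]
    refine rr_sum_le p _ _ hB0 (fun i hi => ?_)
    rw [one_pow, one_mul, ← map_natCast (algebraMap ℚ_[p] L) (k.choose i), mul_comm,
      ← Algebra.smul_def, rr_smul]
    have hc1 : ‖((k.choose i : ℕ) : ℚ_[p])‖ ≤ 1 := by
      have := Padic.norm_int_le_one (p := p) (k.choose i : ℤ)
      push_cast at this ⊢
      exact this
    calc ‖((k.choose i : ℕ) : ℚ_[p])‖ * rr p L (q ^ (k - i))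
        ≤ 1 * B := mul_le_mul hc1 (hq_pow (k - i)) (rr_nonneg p _) zero_le_one
      _ = B := one_mul B
  -- hence the norm of s is at most 1
  have hNs : ‖Algebra.norm ℚ_[p] s‖ ≤ 1 := by
    by_contra hgt
    push_neg at hgt
    obtain ⟨k, hk⟩ := pow_unbounded_of_one_lt (M * B ^ n) hgt
    have hsk : s ^ k ≠ 0 := pow_ne_zero _ hsne
    have h2 := (hbounds (s ^ k) hsk).2
    rw [map_pow, norm_pow] at h2
    have : ‖Algebra.norm ℚ_[p] s‖ ^ k ≤ M * B ^ n := by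
      refine le_trans h2 ?_
      exact mul_le_mul_of_nonneg_left
        (pow_le_pow_left₀ (rr_nonneg p _) (hs_pow k) n) hM
    linarith
  have hfinal : z + w = z * s := by
    rw [hsdef, hq, mul_add, mul_one, mul_comm w, ← mul_assoc, mul_inv_cancel₀ hz, one_mul]
  rw [hfinal, map_mul, norm_mul]
  calc ‖Algebra.norm ℚ_[p] z‖ * ‖Algebra.norm ℚ_[p] s‖
      ≤ ‖Algebra.norm ℚ_[p] z‖ * 1 := by
        exact mul_le_mul_of_nonneg_left hNs (norm_nonneg _)
    _ = ‖Algebra.norm ℚ_[p] z‖ := mul_one _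

end Core3

/-- The `p`-adic valuation on the algebraic closure of `ℚ_p`, normalized so that
`v_p(p) = 1`.  For `x ≠ 0` with minimal polynomial of degree `d` over `ℚ_p`, it is
given by `v_p(c₀)/d` where `c₀` is the constant coefficient of the minimal
polynomial (junk value `0` at `x = 0`). -/
noncomputable def vp (p : ℕ) [Fact p.Prime] (x : AlgebraicClosure ℚ_[p]) : ℝ :=
  (((minpoly ℚ_[p] x).coeff 0).valuation : ℝ) / ((minpoly ℚ_[p] x).natDegree : ℝ)

/-- The canonical embedding of the `p`-adic integers into the algebraic closure of
`ℚ_p`. -/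
noncomputable def pad (p : ℕ) [Fact p.Prime] (m : ℤ_[p]) : AlgebraicClosure ℚ_[p] :=
  algebraMap ℚ_[p] (AlgebraicClosure ℚ_[p]) (m : ℚ_[p])

/-- The averaged indicator `χ̂_r(m) = ∫_{⌈r⌉−1}^{⌈r⌉} χ_u(m) du`, where
`χ_u(m) = 1` if `v_p(m − δ) ≥ u` and `0` otherwise. -/
noncomputable def chihat (p : ℕ) [Fact p.Prime] (δ : AlgebraicClosure ℚ_[p])
    (m : ℤ_[p]) (r : ℝ) : ℝ :=
  ∫ u in ((⌈r⌉ : ℝ) - 1)..(⌈r⌉ : ℝ), if u ≤ vp p (pad p m - δ) then (1 : ℝ) else 0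

section Padics

variable (p)

lemma padic_val_neg_one : (-1 : ℚ_[p]).valuation = 0 := by
  have h := Padic.valuation_mul (p := p) (x := -1) (y := -1) (by norm_num) (by norm_num)
  norm_num at h
  omega

lemma padic_val_neg (c : ℚ_[p]) : (-c).valuation = c.valuation := by
  rcases eq_or_ne c 0 with rfl | hc
  · rw [neg_zero]
  · have h := Padic.valuation_mul (p := p) (x := -1) (y := c) (by norm_num) hc
    rw [neg_one_mul] at h
    rw [h, padic_val_neg_one, zero_add]

lemma padic_val_pow {c : ℚ_[p]} (hc : c ≠ 0) (k : ℕ) :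
    (c ^ k).valuation = k * c.valuation := by
  induction k with
  | zero => simp [Padic.valuation_one]
  | succ k ih =>
      rw [pow_succ, Padic.valuation_mul (pow_ne_zero _ hc) hc, ih]
      push_cast
      ring

lemma padic_val_le_of_norm_le {a b : ℚ_[p]} (ha : a ≠ 0) (hb : b ≠ 0) (h : ‖a‖ ≤ ‖b‖) :
    b.valuation ≤ a.valuation := by
  rw [Padic.norm_eq_zpow_neg_valuation ha, Padic.norm_eq_zpow_neg_valuation hb] at h
  have := (zpow_le_zpow_iff_right₀ (one_lt_p_real p)).mp h
  omega

end Padics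

section VP

open IntermediateField

variable (p)

local notation "AC" => AlgebraicClosure ℚ_[p]

lemma vp_algebraMap (c : ℚ_[p]) : vp p (algebraMap ℚ_[p] AC c) = (c.valuation : ℝ) := by
  rw [vp, minpoly.eq_X_sub_C]
  simp [padic_val_neg]

lemma vp_zero : vp p (0 : AC) = 0 := by
  have := vp_algebraMap p 0
  rw [map_zero] at this
  rw [this, Padic.valuation_zero, Int.cast_zero]

lemma vp_intermediate (L : IntermediateField ℚ_[p] AC) [FiniteDimensional ℚ_[p] L]
    (z : L) (hz : z ≠ 0) :
    vp p (z : AC) = ((Algebra.norm ℚ_[p] z).valuation : ℝ) / (Module.finrank ℚ_[p] L : ℝ) := by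
  classical
  have hzint : IsIntegral ℚ_[p] z := IsIntegral.of_finite ℚ_[p] z
  have hmineq : minpoly ℚ_[p] (z : AC) = minpoly ℚ_[p] z := by
    rw [← IntermediateField.algebraMap_apply, minpoly.algebraMap_eq (algebraMap L _).injective]
  set P := minpoly ℚ_[p] z with hP
  set d := P.natDegree with hd
  have hdpos : 0 < d := minpoly.natDegree_pos hzint
  set a0 := P.coeff 0 with ha0def
  have ha0 : a0 ≠ 0 := minpoly.coeff_zero_ne_zero hzint hz
  set r := Module.finrank (↥ℚ_[p]⟮z⟯) L with hr
  have hrpos : 0 < r := Module.finrank_pos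
  have hnorm : Algebra.norm ℚ_[p] z =
      ((-1 : ℚ_[p]) ^ (IntermediateField.adjoin.powerBasis hzint).dim * a0) ^ r := by
    rw [Algebra.norm_eq_norm_adjoin ℚ_[p] z, ← hr]
    congr 1
    rw [← IntermediateField.adjoin.powerBasis_gen hzint,
      Algebra.PowerBasis.norm_gen_eq_coeff_zero_minpoly,
      IntermediateField.adjoin.powerBasis_gen, IntermediateField.minpoly_gen]
  have hu : ((-1 : ℚ_[p]) ^ (IntermediateField.adjoin.powerBasis hzint).dim * a0) ≠ 0 :=
    mul_ne_zero (pow_ne_zero _ (by norm_num)) ha0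
  have hvalu : ((-1 : ℚ_[p]) ^ (IntermediateField.adjoin.powerBasis hzint).dim * a0).valuation
      = a0.valuation := by
    rw [Padic.valuation_mul (pow_ne_zero _ (by norm_num)) ha0,
      padic_val_pow p (by norm_num : (-1:ℚ_[p]) ≠ 0), padic_val_neg_one]
    ring
  have hvalN : (Algebra.norm ℚ_[p] z).valuation = r * a0.valuation := by
    rw [hnorm, padic_val_pow p hu, hvalu]
  have hfr : Module.finrank ℚ_[p] L = d * r := by
    rw [← Module.finrank_mul_finrank ℚ_[p] (↥ℚ_[p]⟮z⟯) L, IntermediateField.adjoin.finrank hzint]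
  rw [vp, hmineq, hvalN, hfr, show P.natDegree = d from rfl, show P.coeff 0 = a0 from rfl]
  have hd0 : (d : ℝ) ≠ 0 := Nat.cast_ne_zero.mpr hdpos.ne'
  have hr0 : (r : ℝ) ≠ 0 := Nat.cast_ne_zero.mpr hrpos.ne'
  push_cast
  field_simp

lemma vp_coe_ne_zero {L : IntermediateField ℚ_[p] AC} {z : L} (hz : z ≠ 0) :
    (z : AC) ≠ 0 := fun h => hz (by exact_mod_cast h)

lemma vp_mul (x y : AC) (hx : x ≠ 0) (hy : y ≠ 0) :
    vp p (x * y) = vp p x + vp p y := by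
  set L := IntermediateField.adjoin ℚ_[p] ({x, y} : Set AC) with hL
  haveI : FiniteDimensional ℚ_[p] L := by
    apply IntermediateField.finiteDimensional_adjoin
    intro w _
    exact Algebra.IsIntegral.isIntegral w
  have hxL : x ∈ L := IntermediateField.subset_adjoin _ _ (by simp)
  have hyL : y ∈ L := IntermediateField.subset_adjoin _ _ (by simp)
  set zx : L := ⟨x, hxL⟩
  set zy : L := ⟨y, hyL⟩
  have hzx : zx ≠ 0 := fun h => hx (by have := congrArg Subtype.val h; exact this)
  have hzy : zy ≠ 0 := fun h => hy (by have := congrArg Subtype.val h; exact this)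
  have h1 : x * y = ((zx * zy : L) : AC) := rfl
  have hN : ∀ w : L, w ≠ 0 → Algebra.norm ℚ_[p] w ≠ 0 := fun w hw =>
    Algebra.norm_ne_zero_iff.mpr hw
  have e1 := vp_intermediate p L (zx * zy) (mul_ne_zero hzx hzy)
  have e2 := vp_intermediate p L zx hzx
  have e3 := vp_intermediate p L zy hzy
  rw [show ((zx : AC)) = x from rfl] at e2
  rw [show ((zy : AC)) = y from rfl] at e3
  rw [show (((zx * zy : L) : AC)) = x * y from rfl] at e1
  rw [e1, e2, e3, map_mul, Padic.valuation_mul (hN zx hzx) (hN zy hzy)]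
  push_cast
  rw [add_div]

lemma vp_add_min (x y : AC) (hx : x ≠ 0) (hy : y ≠ 0) (hxy : x + y ≠ 0) :
    min (vp p x) (vp p y) ≤ vp p (x + y) := by
  set L := IntermediateField.adjoin ℚ_[p] ({x, y} : Set AC) with hL
  haveI : FiniteDimensional ℚ_[p] L := by
    apply IntermediateField.finiteDimensional_adjoin
    intro w _
    exact Algebra.IsIntegral.isIntegral w
  have hxL : x ∈ L := IntermediateField.subset_adjoin _ _ (by simp)
  have hyL : y ∈ L := IntermediateField.subset_adjoin _ _ (by simp)
  set zx : L := ⟨x, hxL⟩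
  set zy : L := ⟨y, hyL⟩
  have hzx : zx ≠ 0 := fun h => hx (by have := congrArg Subtype.val h; exact this)
  have hzy : zy ≠ 0 := fun h => hy (by have := congrArg Subtype.val h; exact this)
  have hzxy : zx + zy ≠ 0 := fun h => hxy (by simpa using congrArg Subtype.val h)
  have hN : ∀ w : L, w ≠ 0 → Algebra.norm ℚ_[p] w ≠ 0 := fun w hw =>
    Algebra.norm_ne_zero_iff.mpr hw
  have hmax := normmap_add_le_max p zx zy hzx hzy hzxy
  have hfin : (0:ℝ) < (Module.finrank ℚ_[p] L : ℝ) := by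
    exact_mod_cast Module.finrank_pos
  have e1 := vp_intermediate p L (zx + zy) hzxy
  have e2 := vp_intermediate p L zx hzx
  have e3 := vp_intermediate p L zy hzy
  rw [show ((zx : AC)) = x from rfl] at e2
  rw [show ((zy : AC)) = y from rfl] at e3
  rw [show (((zx + zy : L) : AC)) = x + y from rfl] at e1
  rw [e1, e2, e3]
  rcases max_cases ‖Algebra.norm ℚ_[p] zx‖ ‖Algebra.norm ℚ_[p] zy‖ with ⟨hmx, _⟩ | ⟨hmx, _⟩
  · rw [hmx] at hmax
    have := padic_val_le_of_norm_le p (hN _ hzxy) (hN _ hzx) hmax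
    refine le_trans (min_le_left _ _) ?_
    rw [div_le_div_iff_of_pos_right hfin]
    exact_mod_cast this
  · rw [hmx] at hmax
    have := padic_val_le_of_norm_le p (hN _ hzxy) (hN _ hzy) hmax
    refine le_trans (min_le_right _ _) ?_
    rw [div_le_div_iff_of_pos_right hfin]
    exact_mod_cast this

lemma vp_neg (x : AC) (hx : x ≠ 0) : vp p (-x) = vp p x := by
  have h1 : (-x) = algebraMap ℚ_[p] AC (-1) * x := by
    rw [map_neg, map_one, neg_one_mul]
  rw [h1, vp_mul p _ x (by rw [map_neg, map_one]; exact neg_ne_zero.mpr one_ne_zero) hx,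
    vp_algebraMap, padic_val_neg_one]
  norm_num

end VP

section Final

open IntermediateField MeasureTheory

variable (p)

local notation "AC" => AlgebraicClosure ℚ_[p]

lemma vp_sub_val {x : AC} {c : ℚ_[p]} (hc : c ≠ 0) (hx0 : x ≠ 0)
    (hxc0 : x + algebraMap ℚ_[p] AC c ≠ 0) {s : ℝ} (hx : s ≤ vp p x)
    (hxc : s ≤ vp p (x + algebraMap ℚ_[p] AC c)) : s ≤ (c.valuation : ℝ) := by
  have hca : algebraMap ℚ_[p] AC c ≠ 0 :=
    (map_ne_zero_iff (algebraMap ℚ_[p] AC) (algebraMap ℚ_[p] AC).injective).mpr hc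
  have h1 : algebraMap ℚ_[p] AC c = (x + algebraMap ℚ_[p] AC c) + (-x) := by ring
  have h2 := vp_add_min p (x + algebraMap ℚ_[p] AC c) (-x) hxc0 (neg_ne_zero.mpr hx0)
    (by rw [← h1]; exact hca)
  rw [← h1, vp_algebraMap, vp_neg p x hx0] at h2
  exact le_trans (le_min hxc hx) h2

lemma val_unit_mul {z : ℤ} (hz : z ≠ 0) (hzp : ¬ ((p:ℤ) ∣ z)) (k : ℕ) :
    (((z : ℚ_[p])) * (p:ℚ_[p])^k).valuation = k := by
  have hz0 : (z : ℚ_[p]) ≠ 0 := Int.cast_ne_zero.mpr hz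
  have hpq : (p : ℚ_[p]) ≠ 0 := Nat.cast_ne_zero.mpr (Fact.out : p.Prime).ne_zero
  rw [Padic.valuation_mul hz0 (pow_ne_zero _ hpq), Padic.valuation_intCast,
    padicValInt.eq_zero_of_not_dvd hzp, padic_val_pow p hpq, Padic.valuation_p]
  simp

lemma not_dvd_diff {i j : ℕ} (hi : i < p) (hj : j < p) (hne : i ≠ j) :
    ¬ ((p:ℤ) ∣ ((i:ℤ) - j)) := by
  intro hd
  have hzne : ((i:ℤ) - j) ≠ 0 := by omega
  have h3 : p ∣ ((i:ℤ) - j).natAbs := by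
    rw [← Int.natAbs_natCast p]
    exact Int.natAbs_dvd_natAbs.mpr hd
  have h4 := Nat.le_of_dvd (Int.natAbs_pos.mpr hzne) h3
  omega

lemma pad_diff (δ' : AC) (a b : ℤ_[p]) (c : ℚ_[p]) (h : (a : ℚ_[p]) - (b : ℚ_[p]) = c) :
    pad p a - δ' = (pad p b - δ') + algebraMap ℚ_[p] AC c := by
  rw [pad, pad, ← h, map_sub]
  ring

lemma chihat_eq (δ : AC) (m : ℤ_[p]) (r : ℝ) :
    chihat p δ m r =
      max (min ((⌈r⌉:ℝ)) (vp p (pad p m - δ)) - ((⌈r⌉:ℝ) - 1)) 0 := by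
  set V := vp p (pad p m - δ)
  have hab : ((⌈r⌉:ℝ) - 1) ≤ (⌈r⌉:ℝ) := by linarith
  rw [chihat, intervalIntegral.integral_of_le hab]
  have hfun : (fun u : ℝ => if u ≤ V then (1:ℝ) else 0) =
      fun u => Set.indicator (Set.Iic V) (fun _ => (1:ℝ)) u := by
    funext u
    rw [Set.indicator_apply]
    congr 1
  rw [show (∫ u in Set.Ioc ((⌈r⌉:ℝ) - 1) (⌈r⌉:ℝ), if u ≤ V then (1:ℝ) else 0) =
      ∫ u in Set.Ioc ((⌈r⌉:ℝ) - 1) (⌈r⌉:ℝ), Set.indicator (Set.Iic V) (fun _ => (1:ℝ)) u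
    from by rw [hfun]]
  rw [MeasureTheory.setIntegral_indicator measurableSet_Iic, MeasureTheory.setIntegral_const,
    Set.Ioc_inter_Iic, Real.volume_real_Ioc, smul_eq_mul, mul_one]

end Final

/-- Let `h = x − δ` with `δ` in the algebraic closure of `ℚ_p`, `m ∈ ℤ_p`, `t > 0`,
`T = ⌈t⌉`.  Then at most one `i ∈ {0, …, p−1}` satisfies
`v_p(m + i·p^{T−1} − δ) ≥ t`; consequently, for integer `t ≥ 1`,
`χ̂_{t−1}(m) ≥ Σ_{i=0}^{p−1} χ̂_t(m + i·p^{t−1})`. -/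
theorem chihat_division (p : ℕ) [Fact p.Prime] (δ : AlgebraicClosure ℚ_[p]) (m : ℤ_[p]) :
    (∀ t : ℝ, 0 < t → ∀ i j : ℕ, i < p → j < p →
      t ≤ vp p (pad p (m + (i : ℤ_[p]) * (p : ℤ_[p]) ^ (⌈t⌉₊ - 1)) - δ) →
      t ≤ vp p (pad p (m + (j : ℤ_[p]) * (p : ℤ_[p]) ^ (⌈t⌉₊ - 1)) - δ) → i = j) ∧
    (∀ t : ℕ, 1 ≤ t →
      ∑ i ∈ Finset.range p, chihat p δ (m + (i : ℤ_[p]) * (p : ℤ_[p]) ^ (t - 1)) (t : ℝ) ≤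
        chihat p δ m ((t : ℝ) - 1)) := by
  constructor
  · -- Part 1
    intro t ht i j hi hj hvi hvj
    by_contra hne
    set T := ⌈t⌉₊ with hT
    have hT1 : 1 ≤ T := Nat.one_le_ceil_iff.mpr ht
    set xi := pad p (m + (i : ℤ_[p]) * (p : ℤ_[p]) ^ (T - 1)) - δ with hxi
    set xj := pad p (m + (j : ℤ_[p]) * (p : ℤ_[p]) ^ (T - 1)) - δ with hxj
    have hxine : xi ≠ 0 := by
      intro h
      rw [h, vp_zero] at hvi
      linarith
    have hxjne : xj ≠ 0 := by
      intro h
      rw [h, vp_zero] at hvj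
      linarith
    have hzne : ((i:ℤ) - j) ≠ 0 := sub_ne_zero.mpr (by exact_mod_cast hne)
    have hdvd := not_dvd_diff p hi hj hne
    set c : ℚ_[p] := (((i:ℤ) - j : ℤ) : ℚ_[p]) * (p:ℚ_[p])^(T-1) with hc
    have hcne : c ≠ 0 := mul_ne_zero (Int.cast_ne_zero.mpr hzne)
      (pow_ne_zero _ (Nat.cast_ne_zero.mpr (Fact.out : p.Prime).ne_zero))
    have hdiff : xi = xj + algebraMap ℚ_[p] (AlgebraicClosure ℚ_[p]) c := by
      rw [hxi, hxj]
      refine pad_diff p δ _ _ c ?_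
      rw [hc]
      push_cast
      ring
    have hkey := vp_sub_val p hcne hxjne (by rw [← hdiff]; exact hxine) hvj
      (by rw [← hdiff]; exact hvi)
    rw [hc, val_unit_mul p hzne hdvd] at hkey
    have hTc : ((T - 1 : ℕ) : ℝ) = (T:ℝ) - 1 := by
      push_cast [Nat.cast_sub hT1]
      ring
    have hceil : (T:ℝ) < t + 1 := Nat.ceil_lt_add_one ht.le
    rw [show (((T - 1 : ℕ) : ℤ) : ℝ) = ((T - 1 : ℕ) : ℝ) by push_cast; ring] at hkey
    rw [hTc] at hkey
    linarith
  · -- Part 2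
    intro t ht
    have ht1 : (1:ℝ) ≤ (t:ℝ) := by exact_mod_cast ht
    set V : ℤ_[p] → ℝ := fun a => vp p (pad p a - δ) with hV
    have hceil1 : ((⌈(t:ℝ)⌉ : ℤ) : ℝ) = (t:ℝ) := by rw [Int.ceil_natCast]; push_cast; ring
    have hceil2 : ((⌈(t:ℝ) - 1⌉ : ℤ) : ℝ) = (t:ℝ) - 1 := by
      rw [show ((t:ℝ) - 1) = (((t:ℤ) - 1 : ℤ) : ℝ) by push_cast; ring, Int.ceil_intCast]
    have hterm : ∀ i : ℕ, chihat p δ (m + (i : ℤ_[p]) * (p : ℤ_[p]) ^ (t - 1)) (t:ℝ) =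
        max (min (t:ℝ) (V (m + (i : ℤ_[p]) * (p : ℤ_[p]) ^ (t - 1))) - ((t:ℝ) - 1)) 0 := by
      intro i
      rw [chihat_eq, hceil1]
    have hLHS : chihat p δ m ((t:ℝ) - 1) =
        max (min ((t:ℝ) - 1) (V m) - ((t:ℝ) - 1 - 1)) 0 := by
      rw [chihat_eq, hceil2]
    by_cases H : ∀ i ∈ Finset.range p, V (m + (i : ℤ_[p]) * (p : ℤ_[p]) ^ (t - 1)) ≤ (t:ℝ) - 1
    · have hzero : ∑ i ∈ Finset.range p,
          chihat p δ (m + (i : ℤ_[p]) * (p : ℤ_[p]) ^ (t - 1)) (t:ℝ) = 0 := by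
        refine Finset.sum_eq_zero fun i hi => ?_
        rw [hterm i]
        refine max_eq_right ?_
        have h1 := H i hi
        have h2 : min (t:ℝ) (V (m + (i : ℤ_[p]) * (p : ℤ_[p]) ^ (t - 1))) ≤ (t:ℝ) - 1 :=
          le_trans (min_le_right _ _) h1
        linarith
      rw [hzero, hLHS]
      exact le_max_right _ _
    · push_neg at H
      obtain ⟨i₀, hi₀mem, hVi₀⟩ := H
      have hi₀p : i₀ < p := Finset.mem_range.mp hi₀mem
      set a₀ := m + (i₀ : ℤ_[p]) * (p : ℤ_[p]) ^ (t - 1) with ha₀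
      have hx₀ne : pad p a₀ - δ ≠ 0 := by
        intro h
        have : V a₀ = 0 := by rw [hV]; simp only; rw [h, vp_zero]
        rw [this] at hVi₀
        linarith
      have hpadicast : ((t - 1 : ℕ) : ℝ) = (t:ℝ) - 1 := by
        push_cast [Nat.cast_sub ht]
        ring
      -- every other index has small valuation
      have hother : ∀ j, j < p → j ≠ i₀ →
          V (m + (j : ℤ_[p]) * (p : ℤ_[p]) ^ (t - 1)) ≤ (t:ℝ) - 1 := by
        intro j hjp hjne
        by_contra hlt
        push_neg at hlt
        set aj := m + (j : ℤ_[p]) * (p : ℤ_[p]) ^ (t - 1) with haj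
        have hxjne : pad p aj - δ ≠ 0 := by
          intro h
          have : V aj = 0 := by rw [hV]; simp only; rw [h, vp_zero]
          rw [this] at hlt
          linarith
        have hzne : ((j:ℤ) - i₀) ≠ 0 := sub_ne_zero.mpr (by exact_mod_cast hjne)
        have hdvd := not_dvd_diff p hjp hi₀p hjne
        set c : ℚ_[p] := (((j:ℤ) - i₀ : ℤ) : ℚ_[p]) * (p:ℚ_[p])^(t-1) with hc
        have hcne : c ≠ 0 := mul_ne_zero (Int.cast_ne_zero.mpr hzne)
          (pow_ne_zero _ (Nat.cast_ne_zero.mpr (Fact.out : p.Prime).ne_zero))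
        have hdiff : pad p aj - δ = (pad p a₀ - δ) +
            algebraMap ℚ_[p] (AlgebraicClosure ℚ_[p]) c := by
          refine pad_diff p δ _ _ c ?_
          rw [hc, haj, ha₀]
          push_cast
          ring
        have hs : min (V aj) (V a₀) ≤ (c.valuation : ℝ) := by
          refine vp_sub_val p hcne hx₀ne (by rw [← hdiff]; exact hxjne) (min_le_right _ _) ?_
          rw [← hdiff]
          exact min_le_left _ _
        rw [hc, val_unit_mul p hzne hdvd] at hs
        rw [show (((t - 1 : ℕ) : ℤ) : ℝ) = ((t - 1 : ℕ) : ℝ) by push_cast; ring, hpadicast] at hs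
        have : (t:ℝ) - 1 < min (V aj) (V a₀) := lt_min hlt hVi₀
        linarith
      -- the sum reduces to the single term i₀
      have hsum : ∑ i ∈ Finset.range p,
          chihat p δ (m + (i : ℤ_[p]) * (p : ℤ_[p]) ^ (t - 1)) (t:ℝ) =
          chihat p δ a₀ (t:ℝ) := by
        refine Finset.sum_eq_single_of_mem i₀ hi₀mem fun j hj hjne => ?_
        rw [hterm j]
        refine max_eq_right ?_
        have h1 := hother j (Finset.mem_range.mp hj) hjne
        have h2 : min (t:ℝ) (V (m + (j : ℤ_[p]) * (p : ℤ_[p]) ^ (t - 1))) ≤ (t:ℝ) - 1 :=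
          le_trans (min_le_right _ _) h1
        linarith
      -- V m is at least t - 1
      have hVm : (t:ℝ) - 1 ≤ V m := by
        rcases eq_or_ne i₀ 0 with h0 | h0
        · have : a₀ = m := by rw [ha₀, h0]; push_cast; ring
          rw [← this]
          exact hVi₀.le
        · have hi₀ne : ((i₀:ℤ)) ≠ 0 := by exact_mod_cast h0
          have hdvd : ¬ ((p:ℤ) ∣ (i₀:ℤ)) := by
            have := not_dvd_diff p hi₀p (Fact.out : p.Prime).pos h0
            simpa using this
          set c₀ : ℚ_[p] := ((i₀:ℤ) : ℚ_[p]) * (p:ℚ_[p])^(t-1) with hc₀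
          have hc₀ne : c₀ ≠ 0 := mul_ne_zero (Int.cast_ne_zero.mpr hi₀ne)
            (pow_ne_zero _ (Nat.cast_ne_zero.mpr (Fact.out : p.Prime).ne_zero))
          have hval₀ : (c₀.valuation : ℝ) = (t:ℝ) - 1 := by
            rw [hc₀, val_unit_mul p hi₀ne hdvd]
            rw [show (((t - 1 : ℕ) : ℤ) : ℝ) = ((t - 1 : ℕ) : ℝ) by push_cast; ring, hpadicast]
          have hdiff : pad p m - δ = (pad p a₀ - δ) +
              algebraMap ℚ_[p] (AlgebraicClosure ℚ_[p]) (-c₀) := by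
            refine pad_diff p δ _ _ (-c₀) ?_
            rw [hc₀, ha₀]
            push_cast
            ring
          have hBne : algebraMap ℚ_[p] (AlgebraicClosure ℚ_[p]) (-c₀) ≠ 0 :=
            (map_ne_zero_iff _ (algebraMap ℚ_[p] (AlgebraicClosure ℚ_[p])).injective).mpr
              (neg_ne_zero.mpr hc₀ne)
          have hsumne : pad p m - δ ≠ 0 := by
            rw [hdiff]
            intro h
            have hx₀eq : pad p a₀ - δ = algebraMap ℚ_[p] (AlgebraicClosure ℚ_[p]) c₀ := by
              have := congrArg (fun w => w + algebraMap ℚ_[p] (AlgebraicClosure ℚ_[p]) c₀) h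
              simpa [add_assoc, ← map_add] using this
            have : V a₀ = (c₀.valuation : ℝ) := by
              rw [hV]; simp only; rw [hx₀eq, vp_algebraMap]
            rw [this, hval₀] at hVi₀
            linarith
          have hmin := vp_add_min p (pad p a₀ - δ)
            (algebraMap ℚ_[p] (AlgebraicClosure ℚ_[p]) (-c₀)) hx₀ne hBne
            (by rw [← hdiff]; exact hsumne)
          rw [← hdiff, vp_algebraMap, padic_val_neg] at hmin
          have hminval : min (vp p (pad p a₀ - δ)) ((c₀.valuation : ℝ)) = (c₀.valuation : ℝ) :=
            min_eq_right (by rw [hval₀]; exact hVi₀.le)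
          rw [hminval, hval₀] at hmin
          exact hmin
      -- conclude
      rw [hsum, hterm i₀, ← ha₀, hLHS]
      have hmin1 : min ((t:ℝ) - 1) (V m) = (t:ℝ) - 1 := min_eq_left hVm
      rw [hmin1]
      have h1 : min (t:ℝ) (V a₀) - ((t:ℝ) - 1) ≤ 1 := by
        have := min_le_left (t:ℝ) (V a₀)
        linarith
      have h2 : (t:ℝ) - 1 - ((t:ℝ) - 1 - 1) = 1 := by ring
      rw [h2]
      rw [max_eq_left (by norm_num : (0:ℝ) ≤ 1)]
      exact max_le h1 zero_le_one
end

section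
/- Define a resolution of a real ω ≥ 0 to be a sequence (γ_i)_{i≥0} with values in {0} ∪ [1, ∞) such that γ_i ≥ p·γ_{i+1} for all i and Σ γ_i = ω. Then the lexicographically minimal resolution is given by γ̃_i(ω) = p^{−i}·(p−1)/(p − p^{−k})·ω for 0 ≤ i ≤ k and γ̃_i = 0 for i > k, where k = ⌊log_p((p−1)ω + 1)⌋ − 1. -/
open Finset


/-- A resolution of a real `ω ≥ 0`: a sequence `(γ_i)` with values in `{0} ∪ [1, ∞)`
such that `γ_i ≥ p·γ_{i+1}` for all `i` and `Σ γ_i = ω`. -/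
def IsResolution (p : ℕ) (ω : ℝ) (γ : ℕ → ℝ) : Prop :=
  (∀ i, γ i = 0 ∨ 1 ≤ γ i) ∧ (∀ i, (p : ℝ) * γ (i + 1) ≤ γ i) ∧ HasSum γ ω

/-- Lexicographic comparison of sequences: `γ ≤ γ'` iff they are equal or `γ` is
strictly smaller at the first index where they differ. -/
def LexLE (γ γ' : ℕ → ℝ) : Prop :=
  γ = γ' ∨ ∃ i, (∀ j < i, γ j = γ' j) ∧ γ i < γ' i

/-- The candidate minimal resolution:
`γ̃_i(ω) = p^{−i}·(p−1)/(p − p^{−k})·ω` for `0 ≤ i ≤ k` and `0` for `i > k`, where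
`k = ⌊log_p((p−1)ω + 1)⌋ − 1`. -/
noncomputable def minRes (p : ℕ) (ω : ℝ) : ℕ → ℝ := fun i =>
  if (i : ℤ) ≤ ⌊Real.logb p ((p - 1) * ω + 1)⌋ - 1 then
    (p : ℝ) ^ (-(i : ℤ)) * ((p : ℝ) - 1) /
      ((p : ℝ) - (p : ℝ) ^ (-(⌊Real.logb p ((p - 1) * ω + 1)⌋ - 1))) * ω
  else 0

lemma res_nonneg {p : ℕ} {ω : ℝ} {γ : ℕ → ℝ} (h : IsResolution p ω γ) (i : ℕ) : 0 ≤ γ i := by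
  rcases h.1 i with h1 | h1 <;> linarith

lemma res_decay {p : ℕ} {ω : ℝ} {γ : ℕ → ℝ} (h : IsResolution p ω γ) (i j : ℕ) :
    (p : ℝ) ^ j * γ (i + j) ≤ γ i := by
  induction j with
  | zero => simp
  | succ j ih =>
    have h2 := h.2.1 (i + j)
    have hp0 : (0:ℝ) ≤ (p:ℝ) ^ j := by positivity
    have := mul_le_mul_of_nonneg_left h2 hp0
    calc (p:ℝ) ^ (j+1) * γ (i + (j+1)) = (p:ℝ)^j * ((p:ℝ) * γ (i + j + 1)) := by
          rw [show i + (j+1) = i + j + 1 from rfl]; ring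
      _ ≤ (p:ℝ)^j * γ (i+j) := this
      _ ≤ γ i := ih

lemma res_zero_propagate {p : ℕ} {ω : ℝ} {γ : ℕ → ℝ} (hp2 : 2 ≤ (p:ℝ))
    (h : IsResolution p ω γ) {i : ℕ} (hi : γ i = 0) {j : ℕ} (hij : i ≤ j) : γ j = 0 := by
  obtain ⟨d, rfl⟩ := Nat.exists_eq_add_of_le hij
  induction d with
  | zero => simpa using hi
  | succ d ih =>
    have h2 := h.2.1 (i + d)
    have h3 := res_nonneg h (i + d + 1)
    have h4 : (p:ℝ) * γ (i + d + 1) ≤ 0 := by rw [ih (by omega)] at h2; exact h2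
    have h5 : γ (i + d + 1) ≤ 0 := by nlinarith [mul_nonneg (by linarith : (0:ℝ) ≤ (p:ℝ) - 2) h3]
    show γ (i + d + 1) = 0
    linarith

lemma res_exists_zero {p : ℕ} {ω : ℝ} {γ : ℕ → ℝ} (hp2 : 2 ≤ (p:ℝ))
    (h : IsResolution p ω γ) : ∃ i, γ i = 0 := by
  obtain ⟨j, hj⟩ := pow_unbounded_of_one_lt (γ 0) (by linarith : (1:ℝ) < p)
  refine ⟨j, ?_⟩
  rcases h.1 j with h1 | h1
  · exact h1
  · exfalso
    have := res_decay h 0 j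
    simp only [Nat.zero_add] at this
    nlinarith [pow_pos (by linarith : (0:ℝ) < p) j]

lemma res_all_zero {p : ℕ} {ω : ℝ} {γ : ℕ → ℝ} (hp2 : 2 ≤ (p:ℝ))
    (h : IsResolution p ω γ) (h0 : γ 0 = 0) : ω = 0 := by
  have hz : ∀ i, γ i = 0 := fun i => res_zero_propagate hp2 h h0 (Nat.zero_le i)
  have : HasSum γ 0 := by
    have : γ = fun _ => 0 := funext hz
    rw [this]; exact hasSum_zero
  exact h.2.2.unique this


/-- The lexicographically minimal resolution of `ω` is given by the explicit formula
`minRes`: it is a resolution, and it is lexicographically `≤` every resolution of `ω`. -/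
theorem minRes_isLexMinimalResolution (p : ℕ) (hp : p.Prime) (ω : ℝ) (hω : 0 ≤ ω)
    (hex : ∃ γ, IsResolution p ω γ) :
    IsResolution p ω (minRes p ω) ∧ ∀ γ, IsResolution p ω γ → LexLE (minRes p ω) γ := by
  have hp2 : (2:ℝ) ≤ (p:ℝ) := by exact_mod_cast hp.two_le
  have hp0 : (0:ℝ) < p := by linarith
  have hp1 : (1:ℝ) < p := by linarith
  set K := ⌊Real.logb p ((↑p - 1) * ω + 1)⌋ with hK
  have hchar : ∀ n : ℕ, ((n:ℤ) ≤ K ↔ (p:ℝ)^n ≤ (↑p-1)*ω+1) := by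
    intro n
    rw [hK, Int.le_floor]
    have hy : (0:ℝ) < (↑p-1)*ω+1 := by nlinarith
    rw [Real.le_logb_iff_rpow_le hp1 hy]
    push_cast
    rw [Real.rpow_natCast]
  rcases hω.eq_or_lt with h0 | hpos
  · -- ω = 0
    have h0' : ω = 0 := h0.symm
    subst h0'
    have hK0 : K = 0 := by
      rw [hK]; simp
    have hmz : minRes p 0 = fun _ => 0 := by
      funext i
      rw [minRes, if_neg]
      rw [← hK, hK0]
      omega
    constructor
    · rw [hmz]
      exact ⟨fun i => Or.inl rfl, fun i => by simp, by simpa using hasSum_zero⟩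
    · intro γ hγ
      left
      rw [hmz]
      funext i
      have h1 := le_hasSum hγ.2.2 i (fun j _ => res_nonneg hγ j)
      exact (res_nonneg hγ i).antisymm h1
  · -- ω > 0
    obtain ⟨γ0, hγ0⟩ := hex
    have hω1 : 1 ≤ ω := by
      rcases hγ0.1 0 with hz | h1
      · exfalso; have := res_all_zero hp2 hγ0 hz; linarith
      · exact h1.trans (le_hasSum hγ0.2.2 0 (fun j _ => res_nonneg hγ0 j))
    have hK1 : 1 ≤ K := by
      rw [show (1:ℤ) = ((1:ℕ):ℤ) from rfl, hchar 1]
      nlinarith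
    set k' : ℕ := (K-1).toNat with hk'def
    have hk' : (k' : ℤ) = K - 1 := Int.toNat_of_nonneg (by omega)
    set D : ℝ := (p:ℝ) - (p:ℝ)^(-(k':ℤ)) with hD
    have hpkinv : ∀ i : ℕ, (p:ℝ)^(-(i:ℤ)) = ((p:ℝ)⁻¹)^i := by
      intro i; rw [zpow_neg, zpow_natCast, inv_pow]
    have hpkinv_pos : ∀ i : ℕ, 0 < ((p:ℝ)⁻¹)^i := fun i => by positivity
    have hpkinv_le1 : ∀ i : ℕ, ((p:ℝ)⁻¹)^i ≤ 1 := by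
      intro i
      apply pow_le_one₀ (by positivity)
      rw [inv_le_one_iff₀]; right; linarith
    have hDpos : (1:ℝ) ≤ D := by
      rw [hD, hpkinv]
      have := hpkinv_le1 k'
      linarith
    have hform : ∀ i : ℕ, minRes p ω i =
        if (i:ℤ) ≤ K - 1 then (p:ℝ)^(-(i:ℤ)) * ((p:ℝ)-1)/D * ω else 0 := by
      intro i
      rw [minRes, ← hK, ← hk', hD]
    have hmle : ∀ i : ℕ, i ≤ k' → minRes p ω i = (p:ℝ)^(-(i:ℤ)) * ((p:ℝ)-1)/D * ω := by
      intro i hi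
      rw [hform, if_pos (by omega)]
    have hmgt : ∀ i : ℕ, k' < i → minRes p ω i = 0 := by
      intro i hi
      rw [hform, if_neg (by omega)]
    -- the crucial size bound
    have hPK : (p:ℝ)^(k'+1) ≤ (↑p-1)*ω + 1 := by
      rw [← hchar (k'+1)]; push_cast; omega
    have hkey : D ≤ (p:ℝ)^(-(k':ℤ)) * ((p:ℝ)-1) * ω := by
      have e1 : (p:ℝ)^(-(k':ℤ)) * (p:ℝ)^(k'+1) = p := by
        rw [← zpow_natCast (p:ℝ) (k'+1), ← zpow_add₀ (ne_of_gt hp0)]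
        push_cast
        rw [show -(k':ℤ) + ((k':ℤ)+1) = 1 by ring, zpow_one]
      have h2 : (p:ℝ)^(-(k':ℤ)) * ((p:ℝ)^(k'+1) - 1) ≤ (p:ℝ)^(-(k':ℤ)) * ((↑p-1)*ω) := by
        apply mul_le_mul_of_nonneg_left _ (by positivity)
        linarith
      rw [mul_sub, e1, mul_one] at h2
      rw [hD]
      linarith [h2]
    have hone : ∀ i : ℕ, i ≤ k' → 1 ≤ minRes p ω i := by
      intro i hi
      rw [hmle i hi]
      have hmono : (p:ℝ)^(-(k':ℤ)) ≤ (p:ℝ)^(-(i:ℤ)) := by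
        apply zpow_le_zpow_right₀ (le_of_lt hp1)
        omega
      have hD0 : (0:ℝ) < D := by linarith
      have h3 : (p:ℝ)^(-(k':ℤ)) * ((p:ℝ)-1) * ω ≤ (p:ℝ)^(-(i:ℤ)) * ((p:ℝ)-1) * ω := by
        apply mul_le_mul_of_nonneg_right _ (le_of_lt hpos)
        exact mul_le_mul_of_nonneg_right hmono (by linarith)
      rw [div_mul_eq_mul_div, le_div_iff₀ hD0, one_mul]
      exact hkey.trans h3
    have hnn : ∀ i : ℕ, 0 ≤ minRes p ω i := by
      intro i
      rcases le_or_gt i k' with hi | hi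
      · linarith [hone i hi]
      · rw [hmgt i hi]
    have hratio : ∀ i : ℕ, (p:ℝ) * minRes p ω (i+1) ≤ minRes p ω i := by
      intro i
      rcases le_or_gt (i+1) k' with hi | hi
      · rw [hmle (i+1) hi, hmle i (by omega)]
        apply le_of_eq
        have : (p:ℝ) ^ (-((i:ℤ)+1)) * (p:ℝ) = (p:ℝ) ^ (-(i:ℤ)) := by
          rw [show (-((i:ℤ)+1)) = (-(i:ℤ)) + (-1) by ring, zpow_add₀ (ne_of_gt hp0),
            zpow_neg_one]
          field_simp
        push_cast
        rw [div_mul_eq_mul_div, div_mul_eq_mul_div, ← this]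
        ring
      · rw [hmgt (i+1) hi, mul_zero]
        exact hnn i
    have hsum_eq : ∑ i ∈ range (k'+1), minRes p ω i = ω := by
      have hterm : ∀ i ∈ range (k'+1), minRes p ω i = ((p:ℝ)⁻¹)^i * (((p:ℝ)-1)/D*ω) := by
        intro i hi
        rw [mem_range] at hi
        rw [hmle i (by omega), hpkinv]
        ring
      have hx : ((p:ℝ)⁻¹) * p = 1 := inv_mul_cancel₀ (ne_of_gt hp0)
      have hinv1 : (p:ℝ)⁻¹ < 1 := by nlinarith [inv_pos.mpr hp0]
      have hDeq : D = (p:ℝ) - ((p:ℝ)⁻¹)^k' := by rw [hD, hpkinv]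
      have hp1ne : (p:ℝ) - 1 ≠ 0 := by intro h; linarith
      have hine : (p:ℝ)⁻¹ - 1 ≠ 0 := by intro h; linarith
      have hDne : D ≠ 0 := by intro h; rw [h] at hDpos; linarith
      have hGeo : ∑ j ∈ range (k'+1), ((p:ℝ)⁻¹)^j = D / ((p:ℝ)-1) := by
        rw [geom_sum_eq (ne_of_lt hinv1) (k'+1), hDeq, div_eq_div_iff hine hp1ne, pow_succ]
        linear_combination ((((p:ℝ)⁻¹)^k' - 1)) * hx
      rw [Finset.sum_congr rfl hterm, ← Finset.sum_mul, hGeo]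
      field_simp
    have hhs : HasSum (minRes p ω) ω := by
      have h1 : HasSum (minRes p ω) (∑ i ∈ range (k'+1), minRes p ω i) := by
        refine hasSum_sum_of_ne_finset_zero (fun i hi => hmgt i ?_)
        by_contra h
        exact hi (mem_range.mpr (by omega))
      rwa [hsum_eq] at h1
    have hisres : IsResolution p ω (minRes p ω) := by
      refine ⟨fun i => ?_, hratio, hhs⟩
      rcases le_or_gt i k' with hi | hi
      · exact Or.inr (hone i hi)
      · exact Or.inl (hmgt i hi)
    refine ⟨hisres, fun γ hγ => ?_⟩
    by_cases heq : minRes p ω = γ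
    · exact Or.inl heq
    right
    have hexne : ∃ i, minRes p ω i ≠ γ i := by
      by_contra h
      push_neg at h
      exact heq (funext h)
    set i := Nat.find hexne with hi_def
    have hne_i : minRes p ω i ≠ γ i := Nat.find_spec hexne
    have hpre : ∀ j < i, minRes p ω j = γ j := by
      intro j hj
      by_contra h
      exact Nat.find_min hexne hj h
    refine ⟨i, hpre, ?_⟩
    rcases le_or_gt i k' with hik | hik
    swap
    · -- i > k' : minRes i = 0 ≤ γ i
      rw [hmgt i hik]
      exact lt_of_le_of_ne (res_nonneg hγ i) (by rw [← hmgt i hik]; exact hne_i)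
    -- i ≤ k'
    suffices hle : minRes p ω i ≤ γ i from lt_of_le_of_ne hle hne_i
    -- structure of γ
    set n := Nat.find (res_exists_zero hp2 hγ) with hn_def
    have hγn : γ n = 0 := Nat.find_spec (res_exists_zero hp2 hγ)
    have hγpos : ∀ j < n, 1 ≤ γ j := by
      intro j hj
      rcases hγ.1 j with h1 | h1
      · exact absurd h1 (Nat.find_min (res_exists_zero hp2 hγ) hj)
      · exact h1
    have hγzero : ∀ j, n ≤ j → γ j = 0 := fun j hj => res_zero_propagate hp2 hγ hγn hj
    have hn1 : 1 ≤ n := by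
      rcases Nat.eq_zero_or_pos n with h | h
      · exfalso
        have := res_all_zero hp2 hγ (h ▸ hγn)
        linarith
      · exact h
    -- ω = ∑_{j<n} γ j and lower bound giving n ≤ k'+1
    have hωsum : ω = ∑ j ∈ range n, γ j :=
      hγ.2.2.unique (hasSum_sum_of_ne_finset_zero (fun j hj => hγzero j (by simpa using hj)))
    have hlow : ∀ j < n, (p:ℝ)^(n-1-j) ≤ γ j := by
      intro j hj
      have h1 := res_decay hγ j (n-1-j)
      rw [show j + (n-1-j) = n-1 by omega] at h1
      have h2 : 1 ≤ γ (n-1) := hγpos (n-1) (by omega)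
      nlinarith [pow_pos hp0 (n-1-j)]
    have hnK : (n:ℤ) ≤ K := by
      rw [hchar n]
      have h1 : ∑ j ∈ range n, (p:ℝ)^(n-1-j) ≤ ∑ j ∈ range n, γ j := by
        apply Finset.sum_le_sum
        intro j hj
        exact hlow j (by simpa using hj)
      rw [Finset.sum_range_reflect (fun j => (p:ℝ)^j) n] at h1
      rw [geom_sum_eq (by linarith : (p:ℝ) ≠ 1) n] at h1
      rw [div_le_iff₀ (by linarith : (0:ℝ) < (p:ℝ)-1)] at h1
      rw [hωsum]
      nlinarith
    have hnk : n ≤ k' + 1 := by omega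
    -- tail sums
    have hTγ : HasSum (fun j => γ (j + i)) (ω - ∑ j ∈ range i, γ j) := by
      rw [hasSum_nat_add_iff i, sub_add_cancel]
      exact hγ.2.2
    have hTm : HasSum (fun j => minRes p ω (j + i)) (ω - ∑ j ∈ range i, γ j) := by
      have : ∑ j ∈ range i, minRes p ω j = ∑ j ∈ range i, γ j := by
        apply Finset.sum_congr rfl
        intro j hj
        exact hpre j (by simpa using hj)
      rw [hasSum_nat_add_iff i, this, sub_add_cancel]
      exact hhs
    set T := ω - ∑ j ∈ range i, γ j with hT_def
    rcases le_or_gt n i with hni | hni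
    · -- i ≥ n: tail of γ is zero but minRes i ≥ 1, contradiction
      exfalso
      have hT0 : T = 0 := by
        refine hTγ.unique ?_
        have : (fun j => γ (j + i)) = fun _ => (0:ℝ) :=
          funext (fun j => hγzero (j+i) (by omega))
        rw [this]
        exact hasSum_zero
      have h1 : minRes p ω (0 + i) ≤ T :=
        le_hasSum hTm 0 (fun j _ => hnn (j + i))
      rw [Nat.zero_add] at h1
      have := hone i hik
      rw [hT0] at h1
      linarith
    -- i < n : the main computation
    have hTγ_eq : T = ∑ j ∈ range (n - i), γ (j + i) := by
      refine hTγ.unique (hasSum_sum_of_ne_finset_zero fun j hj => ?_)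
      exact hγzero (j + i) (by simp only [mem_range] at hj; omega)
    have hTm_eq : T = ∑ j ∈ range (k' + 1 - i), minRes p ω (j + i) := by
      refine hTm.unique (hasSum_sum_of_ne_finset_zero fun j hj => ?_)
      exact hmgt (j + i) (by simp only [mem_range] at hj; omega)
    have hterm_m : ∀ j ∈ range (k' + 1 - i), minRes p ω (j + i) = ((p:ℝ)⁻¹)^j * minRes p ω i := by
      intro j hj
      rw [mem_range] at hj
      rw [hmle (j+i) (by omega), hmle i hik]
      rw [show (-(((j:ℕ)+i : ℕ) : ℤ)) = (-(j:ℤ)) + (-(i:ℤ)) by push_cast; ring,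
        zpow_add₀ (ne_of_gt hp0), hpkinv]
      ring
    have hterm_γ : ∀ j, γ (j + i) ≤ ((p:ℝ)⁻¹)^j * γ i := by
      intro j
      have h1 := res_decay hγ i j
      rw [show i + j = j + i by omega] at h1
      rw [inv_pow, ← div_eq_inv_mul, le_div_iff₀ (by positivity : (0:ℝ) < (p:ℝ)^j)]
      linarith [h1]
    set G := ∑ j ∈ range (k' + 1 - i), ((p:ℝ)⁻¹)^j with hG_def
    have hG1 : 1 ≤ G := by
      rw [hG_def]
      have h0m : (0:ℕ) ∈ range (k' + 1 - i) := by rw [mem_range]; omega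
      calc (1:ℝ) = ((p:ℝ)⁻¹)^(0:ℕ) := by norm_num
        _ ≤ G := Finset.single_le_sum (fun j _ => le_of_lt (hpkinv_pos j)) h0m
    have hTm' : T = G * minRes p ω i := by
      rw [hTm_eq, Finset.sum_congr rfl hterm_m, ← Finset.sum_mul]
    have hTγ' : T ≤ G * γ i := by
      rw [hTγ_eq]
      have hγi0 : 0 ≤ γ i := res_nonneg hγ i
      calc ∑ j ∈ range (n - i), γ (j + i)
          ≤ ∑ j ∈ range (n - i), ((p:ℝ)⁻¹)^j * γ i :=
            Finset.sum_le_sum (fun j _ => hterm_γ j)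
        _ ≤ ∑ j ∈ range (k' + 1 - i), ((p:ℝ)⁻¹)^j * γ i := by
            apply Finset.sum_le_sum_of_subset_of_nonneg
            · exact Finset.range_subset_range.mpr (by omega)
            · intro j _ _
              exact mul_nonneg (le_of_lt (hpkinv_pos j)) hγi0
        _ = G * γ i := by rw [← Finset.sum_mul]
    have : G * minRes p ω i ≤ G * γ i := by rw [← hTm']; exact hTγ'
    exact le_of_mul_le_mul_left this (by linarith)
end

section
/- Let γ be a minimal resolution (real or integral) and suppose ω < Σ_{i=0}^k p^i = (p^{k+1}−1)/(p−1). Then ω − γ_0(ω) < Σ_{i=0}^{k−1} p^i. -/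
/-- Let `γ` be a minimal resolution of `ω` and suppose
`ω < Σ_{i=0}^k p^i = (p^{k+1} − 1)/(p − 1)`.  Then
`ω − γ_0(ω) < Σ_{i=0}^{k−1} p^i = (p^k − 1)/(p − 1)`. -/
theorem weight_sub_head_lt (p : ℕ) (hp : p.Prime) (k : ℕ) (hk : 0 < k)
    (ω : ℝ) (hω : 0 ≤ ω) (γ : ℕ → ℝ) (hres : IsResolution p ω γ)
    (hminimal : ∀ g, IsResolution p ω g → LexLE γ g)
    (hlt : ω < ((p : ℝ) ^ (k + 1) - 1) / ((p : ℝ) - 1)) :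
    ω - γ 0 < ((p : ℝ) ^ k - 1) / ((p : ℝ) - 1) := by
  obtain ⟨hmem, hratio, hsum⟩ := hres
  set P : ℝ := (p : ℝ) with hPdef
  have hp2 : (2:ℝ) ≤ P := by rw [hPdef]; exact_mod_cast hp.two_le
  have hP1 : (1:ℝ) < P := by linarith
  have hP0 : (0:ℝ) < P := by linarith
  have hγnn : ∀ i, 0 ≤ γ i := by
    intro i; rcases hmem i with h | h
    · simp [h]
    · linarith
  -- γ i bounded by γ 0 / P^i
  have hpow : ∀ i, P ^ i * γ i ≤ γ 0 := by
    intro i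
    induction i with
    | zero => simp
    | succ n ih =>
      have h1 : P ^ (n + 1) * γ (n + 1) = P ^ n * (P * γ (n + 1)) := by ring
      have h2 : P ^ n * (P * γ (n + 1)) ≤ P ^ n * γ n :=
        mul_le_mul_of_nonneg_left (hratio n) (by positivity)
      linarith
  -- downward bound below a nonzero entry
  have hdown : ∀ m, 1 ≤ γ m → ∀ d, d ≤ m → P ^ d ≤ γ (m - d) := by
    intro m hm d
    induction d with
    | zero => intro _; simpa using hm
    | succ n ih =>
      intro hdm
      have hnm : n ≤ m := Nat.le_of_succ_le hdm
      have h1 : P * γ (m - (n + 1) + 1) ≤ γ (m - (n + 1)) := hratio _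
      have h2 : m - (n + 1) + 1 = m - n := by omega
      have h3 : P ^ n ≤ γ (m - n) := ih hnm
      have h4 : P * P ^ n ≤ P * γ (m - n) :=
        mul_le_mul_of_nonneg_left h3 (le_of_lt hP0)
      rw [h2] at h1
      calc P ^ (n + 1) = P * P ^ n := by ring
        _ ≤ P * γ (m - n) := h4
        _ ≤ γ (m - (n + 1)) := h1
  -- a nonzero entry at m forces a geometric partial sum ≤ ω
  have hbig : ∀ m, 1 ≤ γ m → ∑ i ∈ Finset.range (m + 1), P ^ i ≤ ω := by
    intro m hm
    have h1 : ∑ i ∈ Finset.range (m + 1), P ^ i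
        = ∑ i ∈ Finset.range (m + 1), P ^ (m - i) := by
      rw [← Finset.sum_range_reflect (fun i => P ^ i) (m + 1)]
      refine Finset.sum_congr rfl fun i hi => ?_
      have hi' : i < m + 1 := Finset.mem_range.mp hi
      have : m + 1 - 1 - i = m - i := by omega
      rw [this]
    rw [h1]
    have h2 : ∑ i ∈ Finset.range (m + 1), P ^ (m - i)
        ≤ ∑ i ∈ Finset.range (m + 1), γ i := by
      apply Finset.sum_le_sum
      intro i hi
      have him : i ≤ m := Nat.lt_succ_iff.mp (Finset.mem_range.mp hi)
      have := hdown m hm (m - i) (Nat.sub_le _ _)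
      have h3 : m - (m - i) = i := by omega
      rwa [h3] at this
    exact h2.trans (sum_le_hasSum _ (fun i _ => hγnn i) hsum)
  have hgeom := fun n => geom_sum_eq (ne_of_gt hP1) n
  have hltS : ω < ∑ i ∈ Finset.range (k + 1), P ^ i := by
    rw [hgeom (k + 1)]; exact hlt
  -- support of γ is contained in {0,…,k}
  have hzero : ∀ m, k < m → γ m = 0 := by
    intro m hkm
    rcases hmem m with h | h
    · exact h
    · exfalso
      have h1 : ∑ i ∈ Finset.range (k + 1), P ^ i
          ≤ ∑ i ∈ Finset.range (m + 1), P ^ i := by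
        apply Finset.sum_le_sum_of_subset_of_nonneg
        · exact Finset.range_subset_range.mpr (by omega)
        · intro i _ _; positivity
      have := hbig m h
      linarith
  -- ω is the finite sum
  have hωeq : ω = ∑ i ∈ Finset.range (k + 1), γ i := by
    refine (HasSum.unique hsum ?_)
    apply hasSum_sum_of_ne_finset_zero
    intro m hm
    exact hzero m (by simpa [Nat.lt_succ_iff, not_le] using (Finset.mem_range.not.mp hm))
  -- key inequality : P^k * ω ≤ γ 0 * S
  set S : ℝ := ∑ i ∈ Finset.range (k + 1), P ^ i with hSdef
  have hkey : P ^ k * ω ≤ γ 0 * S := by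
    rw [hωeq, Finset.mul_sum]
    have h1 : ∀ i ∈ Finset.range (k + 1), P ^ k * γ i ≤ P ^ (k - i) * γ 0 := by
      intro i hi
      have him : i ≤ k := Nat.lt_succ_iff.mp (Finset.mem_range.mp hi)
      have h2 : P ^ k = P ^ (k - i) * P ^ i := by
        rw [← pow_add]; congr 1; omega
      rw [h2, mul_assoc]
      exact mul_le_mul_of_nonneg_left (hpow i) (by positivity)
    calc ∑ i ∈ Finset.range (k + 1), P ^ k * γ i
        ≤ ∑ i ∈ Finset.range (k + 1), P ^ (k - i) * γ 0 := Finset.sum_le_sum h1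
      _ = (∑ i ∈ Finset.range (k + 1), P ^ (k - i)) * γ 0 := by
          rw [← Finset.sum_mul]
      _ = S * γ 0 := by
          congr 1
          rw [hSdef, ← Finset.sum_range_reflect (fun i => P ^ i) (k + 1)]
          refine Finset.sum_congr rfl fun i hi => ?_
          have hi' : i < k + 1 := Finset.mem_range.mp hi
          have : k + 1 - 1 - i = k - i := by omega
          rw [this]
      _ = γ 0 * S := mul_comm _ _
  set T : ℝ := ∑ i ∈ Finset.range k, P ^ i with hTdef
  have hST : S = T + P ^ k := by rw [hSdef, hTdef, Finset.sum_range_succ]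
  have hT1 : (1:ℝ) ≤ T := by
    rw [hTdef]
    calc (1:ℝ) = P ^ 0 := by norm_num
      _ ≤ ∑ i ∈ Finset.range k, P ^ i :=
        Finset.single_le_sum (f := fun i => P ^ i) (fun i _ => by positivity)
          (Finset.mem_range.mpr hk)
  have hS0 : (0:ℝ) < S := by
    have : (0:ℝ) < P ^ k := by positivity
    linarith
  have hgoal : ω - γ 0 < T := by
    have h1 : ω * T < S * T := by
      apply mul_lt_mul_of_pos_right hltS (by linarith)
    nlinarith
  rw [← hgeom k]
  exact hgoal
end

section
/- Define a(v) = γ_{d(δ,v)}(ω_a) and b(v) = γ_{d(δ,v)}(ω_b) on the infinite p-ary tree, where d(δ,v) is the distance from the root and γ is a minimal resolution. Then a and b are weight functions with weights ω_a, ω_b respectively, and ⟨a, b⟩ = Σ_{i=0}^∞ p^i γ_i(ω_a) γ_i(ω_b); hence the lower bound ⟨a,b⟩ ≥ Σ p^i γ_i(ω_a)γ_i(ω_b) is sharp. -/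
/-- Vertices of the infinite rooted `p`-ary tree are finite words over `Fin p`;
the root is the empty word `[]` and the children of `v` are the words `v ++ [i]`.
`pathVertex p T n` is the vertex at depth `n` along the infinite path determined
by `T : ℕ → Fin p`. -/
def pathVertex (p : ℕ) (T : ℕ → Fin p) (n : ℕ) : List (Fin p) :=
  (List.range n).map fun j => T j

/-- A weight function with weight `ω` on the infinite `p`-ary tree: its values lie in
`{0} ∪ [1, ∞)`, every infinite path from the root has total weight at least `ω`
(sums taken in `ℝ≥0∞`), and the value at each vertex dominates the sum of the values
at its children. -/
def IsWeight (p : ℕ) (ω : ℝ) (a : List (Fin p) → ℝ) : Prop :=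
  (∀ v, a v = 0 ∨ 1 ≤ a v) ∧
  (∀ T : ℕ → Fin p, ENNReal.ofReal ω ≤ ∑' n : ℕ, ENNReal.ofReal (a (pathVertex p T n))) ∧
  (∀ v : List (Fin p), ∑ i : Fin p, a (v ++ [i]) ≤ a v)

/-- Let `γa, γb` be minimal resolutions of `ω_a, ω_b` and define
`a(v) = γa_{d(δ,v)}`, `b(v) = γb_{d(δ,v)}` on the infinite `p`-ary tree, where the
distance from the root is the length of the word `v`.  Then `a` and `b` are weight
functions with weights `ω_a, ω_b`, and `⟨a, b⟩ = Σ_{i=0}^∞ p^i γa_i γb_i`; hence the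
lower bound `⟨a,b⟩ ≥ Σ p^i γ_i(ω_a)γ_i(ω_b)` is sharp. -/
theorem depth_weight_functions_sharp (p : ℕ) (hp : p.Prime) (ωa ωb : ℝ)
    (hωa : 0 ≤ ωa) (hωb : 0 ≤ ωb) (γa γb : ℕ → ℝ)
    (hra : IsResolution p ωa γa) (hmina : ∀ g, IsResolution p ωa g → LexLE γa g)
    (hrb : IsResolution p ωb γb) (hminb : ∀ g, IsResolution p ωb g → LexLE γb g) :
    IsWeight p ωa (fun v => γa v.length) ∧
    IsWeight p ωb (fun v => γb v.length) ∧
    ∑' v : List (Fin p), ENNReal.ofReal (γa v.length * γb v.length) =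
      ∑' i : ℕ, ENNReal.ofReal ((p : ℝ) ^ i * γa i * γb i) := by
  obtain ⟨ha1, ha2, ha3⟩ := hra
  obtain ⟨hb1, hb2, hb3⟩ := hrb
  have hγa0 : ∀ i, 0 ≤ γa i := fun i =>
    (ha1 i).elim (fun h => h ▸ le_refl _) (fun h => zero_le_one.trans h)
  have hγb0 : ∀ i, 0 ≤ γb i := fun i =>
    (hb1 i).elim (fun h => h ▸ le_refl _) (fun h => zero_le_one.trans h)
  have hlen : ∀ (T : ℕ → Fin p) (n : ℕ), (pathVertex p T n).length = n := by
    intro T n; simp [pathVertex]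
  have weight : ∀ (ω : ℝ) (γ : ℕ → ℝ), (∀ i, γ i = 0 ∨ 1 ≤ γ i) →
      (∀ i, (p : ℝ) * γ (i + 1) ≤ γ i) → HasSum γ ω → (∀ i, 0 ≤ γ i) →
      IsWeight p ω (fun v => γ v.length) := by
    intro ω γ h1 h2 h3 h0
    refine ⟨fun v => h1 _, ?_, ?_⟩
    · intro T
      have : ∑' n : ℕ, ENNReal.ofReal (γ (pathVertex p T n).length)
          = ENNReal.ofReal ω := by
        simp only [hlen]
        rw [← h3.tsum_eq, ENNReal.ofReal_tsum_of_nonneg h0 h3.summable]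
      exact this.ge
    · intro v
      have : ∑ i : Fin p, γ (v ++ [i]).length = (p : ℝ) * γ (v.length + 1) := by
        simp [Finset.sum_const, mul_comm, nsmul_eq_mul]
      simpa [this] using h2 v.length
  refine ⟨weight ωa γa ha1 ha2 ha3 hγa0, weight ωb γb hb1 hb2 hb3 hγb0, ?_⟩
  rw [← (Equiv.sigmaFiberEquiv (List.length : List (Fin p) → ℕ)).tsum_eq,
    ENNReal.tsum_sigma']
  refine tsum_congr fun n => ?_
  have hconst : ∀ v : { x : List (Fin p) // x.length = n },
      ENNReal.ofReal (γa (v : List (Fin p)).length * γb (v : List (Fin p)).length)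
        = ENNReal.ofReal (γa n * γb n) := by
    intro v; rw [v.2]
  letI : Fintype { x : List (Fin p) // x.length = n } :=
    inferInstanceAs (Fintype (List.Vector (Fin p) n))
  rw [tsum_fintype]
  simp only [Equiv.sigmaFiberEquiv, Equiv.coe_fn_mk, hconst]
  rw [Finset.sum_const, Finset.card_univ]
  have hcard : Fintype.card { x : List (Fin p) // x.length = n } = p ^ n := by
    have h : Fintype.card (List.Vector (Fin p) n) = p ^ n := by
      rw [card_vector, Fintype.card_fin]
    exact h
  rw [hcard, nsmul_eq_mul, mul_assoc, ← ENNReal.ofReal_natCast (p ^ n),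
    ← ENNReal.ofReal_mul (by positivity)]
  push_cast
  ring_nf
end
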